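/- Let $\Omega = \omega \times (-1,1)$ and let $u \in (H^1(\Omega))^3$ satisfy $e_{i3}(u) = 0$ for $i = 1,2,3$, where $e_{ij}(u) = \tfrac12(\partial_i u_j + \partial_j u_i)$. Then there exist $\zeta_\alpha \in H^1(\omega)$ ($\alpha = 1,2$) and $\zeta_3 \in H^2(\omega)$ such that $u_\alpha(x_1,x_2,x_3) = \zeta_\alpha(x_1,x_2) - x_3\, \partial_\alpha \zeta_3(x_1,x_2)$ and $u_3(x_1,x_2,x_3) = \zeta_3(x_1,x_2)$. -/

import Mathlib

noncomputable section

/-- Basis directions of `(ℝ × ℝ) × ℝ`. -/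
def dir : Fin 3 → (ℝ × ℝ) × ℝ := ![((1, 0), 0), ((0, 1), 0), ((0, 0), 1)]

/-- Partial derivative of a function on `(ℝ × ℝ) × ℝ` in direction `i`. -/
def pd (i : Fin 3) (f : (ℝ × ℝ) × ℝ → ℝ) (x : (ℝ × ℝ) × ℝ) : ℝ :=
  fderiv ℝ f x (dir i)

/-- Horizontal basis directions of `ℝ × ℝ`. -/
def hdir : Fin 2 → ℝ × ℝ := ![(1, 0), (0, 1)]

/-- Partial derivative of a function on `ℝ × ℝ`. -/
def pd2 (α : Fin 2) (f : ℝ × ℝ → ℝ) (y : ℝ × ℝ) : ℝ :=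
  fderiv ℝ f y (hdir α)

/-- Linearized strain tensor `e_{ij}(u) = ½(∂ᵢu_j + ∂_j uᵢ)`. -/
def strain (u : Fin 3 → (ℝ × ℝ) × ℝ → ℝ) (i j : Fin 3)
    (x : (ℝ × ℝ) × ℝ) : ℝ :=
  (pd i (u j) x + pd j (u i) x) / 2

lemma const_on_Ioo {g : ℝ → ℝ}
    (h : ∀ t ∈ Set.Ioo (-1:ℝ) 1, HasDerivAt g 0 t) :
    ∀ t ∈ Set.Ioo (-1:ℝ) 1, g t = g 0 := by
  intro t ht
  refine (convex_Ioo (-1:ℝ) 1).is_const_of_fderivWithin_eq_zero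
    (fun s hs => (h s hs).differentiableAt.differentiableWithinAt)
    (fun s hs => ?_) ht (by norm_num)
  rw [fderivWithin_of_isOpen isOpen_Ioo hs, (h s hs).hasFDerivAt.fderiv]
  ext; simp

/-- Kirchhoff–Love characterization: a displacement field on
`Ω = ω × (-1,1)` with vanishing transverse strains `e_{i3}(u) = 0` is of
bending type: `u_α = ζ_α - x₃ ∂_α ζ₃`, `u₃ = ζ₃`. -/
theorem kirchhoff_love_characterization
    (ω : Set (ℝ × ℝ)) (hω : IsOpen ω) (hconn : IsConnected ω)
    (hωb : Bornology.IsBounded ω)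
    (u : Fin 3 → (ℝ × ℝ) × ℝ → ℝ) (hu : ∀ i, ContDiff ℝ 1 (u i))
    (hstrain : ∀ (i : Fin 3) (x : (ℝ × ℝ) × ℝ),
      x ∈ ω ×ˢ Set.Ioo (-1 : ℝ) 1 → strain u i 2 x = 0) :
    ∃ (ζ₁ ζ₂ ζ₃ : ℝ × ℝ → ℝ),
      DifferentiableOn ℝ ζ₁ ω ∧ DifferentiableOn ℝ ζ₂ ω ∧
      DifferentiableOn ℝ ζ₃ ω ∧
      (∀ α : Fin 2, DifferentiableOn ℝ (pd2 α ζ₃) ω) ∧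
      (∀ x ∈ ω ×ˢ Set.Ioo (-1 : ℝ) 1,
        u 0 x = ζ₁ x.1 - x.2 * pd2 0 ζ₃ x.1 ∧
        u 1 x = ζ₂ x.1 - x.2 * pd2 1 ζ₃ x.1 ∧
        u 2 x = ζ₃ x.1) := by
  have hud : ∀ i, Differentiable ℝ (u i) := fun i => (hu i).differentiable one_ne_zero
  have hΩo : IsOpen (ω ×ˢ Set.Ioo (-1 : ℝ) 1) := hω.prod isOpen_Ioo
  -- slices are differentiable
  have hslice : ∀ (i : Fin 3) (c : ℝ), Differentiable ℝ (fun y : ℝ × ℝ => u i (y, c)) :=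
    fun i c => (hud i).comp (differentiable_id.prodMk (differentiable_const c))
  set ζ₁ : ℝ × ℝ → ℝ := fun y => u 0 (y, 0) with hζ₁
  set ζ₂ : ℝ × ℝ → ℝ := fun y => u 1 (y, 0) with hζ₂
  set ζ₃ : ℝ × ℝ → ℝ := fun y => u 2 (y, 0) with hζ₃
  -- vertical derivative of any component
  have hvert : ∀ (i : Fin 3) (y : ℝ × ℝ) (s : ℝ),
      HasDerivAt (fun s => u i (y, s)) (fderiv ℝ (u i) (y, s) (dir 2)) s := by
    intro i y s
    have h1 : HasDerivAt (fun s : ℝ => ((y, s) : (ℝ × ℝ) × ℝ)) (0, 1) s :=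
      (hasDerivAt_const s y).prodMk (hasDerivAt_id s)
    exact ((hud i (y, s)).hasFDerivAt.comp_hasDerivAt s h1)
  -- step 1 : u₃ does not depend on x₃
  have hstep1 : ∀ y ∈ ω, ∀ t ∈ Set.Ioo (-1:ℝ) 1, u 2 (y, t) = ζ₃ y := by
    intro y hy
    apply const_on_Ioo
    intro s hs
    have h2 := hvert 2 y s
    have h3 : fderiv ℝ (u 2) (y, s) (dir 2) = 0 := by
      have h := hstrain 2 (y, s) ⟨hy, hs⟩
      simp only [strain, pd] at h
      linarith
    rwa [h3] at h2
  -- derivative of ζ₃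
  have hζ₃d : ∀ (α : Fin 2) (y : ℝ × ℝ),
      pd2 α ζ₃ y = fderiv ℝ (u 2) (y, 0) (hdir α, 0) := by
    intro α y
    have hL : HasFDerivAt ζ₃
        ((fderiv ℝ (u 2) (y, 0)).comp (ContinuousLinearMap.inl ℝ (ℝ × ℝ) ℝ)) y :=
      (hud 2 (y, 0)).hasFDerivAt.comp y (ContinuousLinearMap.inl ℝ (ℝ × ℝ) ℝ).hasFDerivAt
    rw [pd2, hL.fderiv]
    rfl
  have hζ₃diff : Differentiable ℝ ζ₃ := hslice 2 0
  -- step K : horizontal derivatives of u₃ don't depend on x₃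
  have hK : ∀ (α : Fin 2), ∀ y ∈ ω, ∀ t ∈ Set.Ioo (-1:ℝ) 1,
      fderiv ℝ (u 2) (y, t) (hdir α, 0) = pd2 α ζ₃ y := by
    intro α y hy t ht
    have hev : u 2 =ᶠ[nhds ((y, t) : (ℝ × ℝ) × ℝ)] fun p => ζ₃ p.1 :=
      Filter.eventuallyEq_of_mem (hΩo.mem_nhds ⟨hy, ht⟩)
        (fun p hp => hstep1 p.1 hp.1 p.2 hp.2)
    have hF : HasFDerivAt (fun p : (ℝ × ℝ) × ℝ => ζ₃ p.1)
        ((fderiv ℝ ζ₃ y).comp (ContinuousLinearMap.fst ℝ (ℝ × ℝ) ℝ)) (y, t) :=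
      (hζ₃diff y).hasFDerivAt.comp (f := Prod.fst) (y, t) hasFDerivAt_fst
    rw [hev.fderiv_eq, hF.fderiv]
    rfl
  -- step 2 : key affine formula
  have key : ∀ (a : Fin 3) (α : Fin 2), dir a = (hdir α, 0) →
      ∀ y ∈ ω, ∀ t ∈ Set.Ioo (-1:ℝ) 1,
      u a (y, t) = u a (y, 0) - t * pd2 α ζ₃ y := by
    intro a α hda y hy t ht
    have hconst : ∀ t ∈ Set.Ioo (-1:ℝ) 1,
        (fun s => u a (y, s) + s * pd2 α ζ₃ y) t
          = (fun s => u a (y, s) + s * pd2 α ζ₃ y) 0 := by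
      apply const_on_Ioo
      intro s hs
      have h1 := (hvert a y s).add
        ((hasDerivAt_id s).mul_const (pd2 α ζ₃ y))
      have h3 : fderiv ℝ (u a) (y, s) (dir 2) = - pd2 α ζ₃ y := by
        have h := hstrain a (y, s) ⟨hy, hs⟩
        simp only [strain, pd] at h
        have h4 := hK α y hy s hs
        rw [← hda] at h4
        linarith
      have : fderiv ℝ (u a) (y, s) (dir 2) + 1 * pd2 α ζ₃ y = 0 := by
        rw [h3]; ring
      rwa [this] at h1
    have := hconst t ht
    simp only at this
    linarith [this]
  have key0 := key 0 0 rfl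
  have key1 := key 1 1 rfl
  -- differentiability of pd2 α ζ₃ on ω
  have hpdiff : ∀ α : Fin 2, DifferentiableOn ℝ (pd2 α ζ₃) ω := by
    have half : (1/2 : ℝ) ∈ Set.Ioo (-1:ℝ) 1 := by norm_num
    intro α
    fin_cases α
    · refine DifferentiableOn.congr (f := fun y => 2 * (u 0 (y, 0) - u 0 (y, 1/2)))
        (((hslice 0 0).sub (hslice 0 (1/2))).const_mul 2).differentiableOn
        (fun y hy => ?_)
      have := key0 y hy (1/2) half
      show pd2 0 ζ₃ y = 2 * (u 0 (y, 0) - u 0 (y, 1/2))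
      linarith
    · refine DifferentiableOn.congr (f := fun y => 2 * (u 1 (y, 0) - u 1 (y, 1/2)))
        (((hslice 1 0).sub (hslice 1 (1/2))).const_mul 2).differentiableOn
        (fun y hy => ?_)
      have := key1 y hy (1/2) half
      show pd2 1 ζ₃ y = 2 * (u 1 (y, 0) - u 1 (y, 1/2))
      linarith
  refine ⟨ζ₁, ζ₂, ζ₃, (hslice 0 0).differentiableOn, (hslice 1 0).differentiableOn,
    hζ₃diff.differentiableOn, hpdiff, ?_⟩
  rintro ⟨y, t⟩ ⟨hy, ht⟩
  exact ⟨key0 y hy t ht, key1 y hy t ht, hstep1 y hy t ht⟩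

end
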